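/- arXiv:1203.4662 — 7 statements merged into one kernel-verified Lean document; each statement's English description precedes it below -/
import Mathlib

section
/- Let L/F be a finite abelian extension of number fields with L = F(α, β) for some α, β ∈ L. Let a, b be nonzero elements of F and ν = [L : F(α)]. Then L = F(aα + b(νβ − Tr_{L/F(α)}(β))). -/
open scoped IntermediateField

/-- The equalizer of an `F`-algebra automorphism of `L` with the identity, as an
intermediate field. -/
def AlgEquiv.eqField {F L : Type*} [Field F] [Field L] [Algebra F L] (σ : L ≃ₐ[F] L) :
    IntermediateField F L where
  carrier := {x | σ x = x}
  mul_mem' := by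
    intro x y hx hy
    simp only [Set.mem_setOf_eq] at *
    rw [map_mul, hx, hy]
  one_mem' := by simp
  add_mem' := by
    intro x y hx hy
    simp only [Set.mem_setOf_eq] at *
    rw [map_add, hx, hy]
  zero_mem' := by simp
  algebraMap_mem' := fun r => σ.commutes r
  inv_mem' := by
    intro x hx
    simp only [Set.mem_setOf_eq] at *
    rw [map_inv₀, hx]

lemma fix_of_fix_gen {F L : Type*} [Field F] [Field L] [Algebra F L]
    (σ : L ≃ₐ[F] L) (S : Set L) (h : ∀ x ∈ S, σ x = x) :
    ∀ x ∈ IntermediateField.adjoin F S, σ x = x := by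
  have : IntermediateField.adjoin F S ≤ σ.eqField := by
    rw [IntermediateField.adjoin_le_iff]
    exact h
  exact fun x hx => this hx

lemma fixedField_bot' {F L : Type*} [Field F] [Field L] [Algebra F L] :
    IntermediateField.fixedField (⊥ : Subgroup (L ≃ₐ[F] L)) = ⊤ := by
  rw [eq_top_iff]
  rintro x -
  rintro ⟨g, hg⟩
  rw [Subgroup.mem_bot] at hg
  subst hg
  rfl

/-- Let `L/F` be a finite abelian extension of number fields with `L = F(α, β)`.
Let `a, b` be nonzero elements of `F` and `ν = [L : F(α)]`. Then
`L = F(aα + b(νβ − Tr_{L/F(α)}(β)))`. -/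
theorem stmt0 (F L : Type*) [Field F] [Field L] [Algebra F L]
    [NumberField F] [NumberField L] [FiniteDimensional F L] [IsGalois F L]
    (habel : ∀ σ τ : L ≃ₐ[F] L, σ * τ = τ * σ)
    (α β : L) (hgen : IntermediateField.adjoin F {α, β} = ⊤)
    (a b : F) (ha : a ≠ 0) (hb : b ≠ 0) :
    IntermediateField.adjoin F
      {algebraMap F L a * α +
        algebraMap F L b *
          ((Module.finrank F⟮α⟯ L : L) * β - ((Algebra.trace F⟮α⟯ L β : F⟮α⟯) : L))} = ⊤ := by
  classical
  haveI : FiniteDimensional F⟮α⟯ L := FiniteDimensional.right F F⟮α⟯ L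
  haveI : IsGalois F⟮α⟯ L := IsGalois.tower_top_of_isGalois F F⟮α⟯ L
  set ν : ℕ := Module.finrank F⟮α⟯ L with hν
  set t : L := ((Algebra.trace F⟮α⟯ L β : F⟮α⟯) : L) with ht
  set A : L := algebraMap F L a with hA
  set B : L := algebraMap F L b with hB
  set γ : L := A * α + B * ((ν : L) * β - t) with hγ
  set H : Subgroup (L ≃ₐ[F] L) := IntermediateField.fixingSubgroup F⟮α⟯ with hH
  have hHα : ∀ τ : H, (τ : L ≃ₐ[F] L) α = α := fun τ =>
    τ.2 ⟨α, IntermediateField.mem_adjoin_simple_self F α⟩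
  have hHt : ∀ τ : H, (τ : L ≃ₐ[F] L) t = t := fun τ =>
    τ.2 ⟨t, ((Algebra.trace F⟮α⟯ L β : F⟮α⟯)).2⟩
  -- the sum of conjugates of β over H is t
  have hsum : ∑ τ : H, (τ : L ≃ₐ[F] L) β = t := by
    have h1 : t = algebraMap F⟮α⟯ L (Algebra.trace F⟮α⟯ L β) := rfl
    rw [h1, trace_eq_sum_automorphisms]
    exact Fintype.sum_equiv (IntermediateField.fixingSubgroupEquiv F⟮α⟯).toEquiv
      (fun τ : H => (τ : L ≃ₐ[F] L) β) (fun σ : L ≃ₐ[F⟮α⟯] L => σ β) (fun τ => rfl)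
  have hcard : Fintype.card H = ν := by
    rw [Fintype.card_congr (IntermediateField.fixingSubgroupEquiv F⟮α⟯).toEquiv]
    rw [← Nat.card_eq_fintype_card]
    exact IsGalois.card_aut_eq_finrank F⟮α⟯ L
  -- sum of conjugates of γ over H
  have hsumγ : ∑ τ : H, (τ : L ≃ₐ[F] L) γ = (ν : L) * (A * α) := by
    have expand : ∀ τ : H, (τ : L ≃ₐ[F] L) γ
        = (A * α - B * t) + (B * (ν : L)) * ((τ : L ≃ₐ[F] L) β) := by
      intro τ
      rw [hγ, map_add, map_mul, map_mul, map_sub, map_mul]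
      rw [hHα τ, hHt τ, hA, hB, AlgEquiv.commutes, AlgEquiv.commutes, map_natCast]
      ring
    rw [Finset.sum_congr rfl (fun τ _ => expand τ), Finset.sum_add_distrib,
      Finset.sum_const, ← Finset.mul_sum, hsum, Finset.card_univ, hcard, nsmul_eq_mul]
    ring
  have hν0 : (ν : L) ≠ 0 := by
    have : 0 < ν := Module.finrank_pos
    exact_mod_cast Nat.cast_ne_zero.mpr this.ne'
  have hA0 : A ≠ 0 := by
    simp only [hA, ne_eq, map_eq_zero]
    exact ha
  have hB0 : B ≠ 0 := by
    simp only [hB, ne_eq, map_eq_zero]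
    exact hb
  -- the fixing subgroup of F⟮γ⟯ is trivial
  have key : IntermediateField.fixingSubgroup (IntermediateField.adjoin F {γ}) = ⊥ := by
    rw [eq_bot_iff]
    intro σ hσ
    rw [Subgroup.mem_bot]
    have hσγ : σ γ = γ :=
      (IntermediateField.mem_fixingSubgroup_iff _ σ).mp hσ γ
        (IntermediateField.mem_adjoin_simple_self F γ)
    -- step 1 : σ α = α
    have h1 : σ (∑ τ : H, (τ : L ≃ₐ[F] L) γ) = ∑ τ : H, (τ : L ≃ₐ[F] L) γ := by
      rw [map_sum]
      calc ∑ τ : H, σ ((τ : L ≃ₐ[F] L) γ)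
          = ∑ τ : H, (σ * (τ : L ≃ₐ[F] L)) γ := rfl
        _ = ∑ τ : H, ((τ : L ≃ₐ[F] L) * σ) γ := by
            refine Finset.sum_congr rfl fun τ _ => ?_
            rw [habel]
        _ = ∑ τ : H, (τ : L ≃ₐ[F] L) (σ γ) := rfl
        _ = ∑ τ : H, (τ : L ≃ₐ[F] L) γ := by rw [hσγ]
    rw [hsumγ, map_mul, map_mul, map_natCast] at h1
    have hσA : σ A = A := σ.commutes a
    rw [hσA] at h1
    have hσα : σ α = α := by
      have := mul_left_cancel₀ hν0 h1
      exact mul_left_cancel₀ hA0 this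
    -- step 2 : σ fixes F⟮α⟯, hence fixes t
    have hfix : ∀ x ∈ F⟮α⟯, σ x = x := by
      apply fix_of_fix_gen
      intro x hx
      rw [Set.mem_singleton_iff] at hx
      rw [hx, hσα]
    have hσt : σ t = t := hfix t ((Algebra.trace F⟮α⟯ L β : F⟮α⟯)).2
    -- step 3 : σ β = β
    have hσβ : σ β = β := by
      have h2 : σ γ = A * α + B * ((ν : L) * σ β - t) := by
        rw [hγ, map_add, map_mul, map_mul, map_sub, map_mul, hσα, hσt,
          hA, hB, AlgEquiv.commutes, AlgEquiv.commutes, map_natCast]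
      have h2' : A * α + B * ((ν : L) * σ β - t) = A * α + B * ((ν : L) * β - t) := by
        rw [← h2, hσγ, hγ]
      have h3 := mul_left_cancel₀ hB0 (add_left_cancel h2')
      have h4 : (ν : L) * σ β = (ν : L) * β := sub_left_inj.mp h3
      exact mul_left_cancel₀ hν0 h4
    -- conclude σ = 1
    ext x
    have hx : x ∈ IntermediateField.adjoin F ({α, β} : Set L) := by
      rw [hgen]; trivial
    refine fix_of_fix_gen σ {α, β} ?_ x hx
    rintro y (rfl | rfl)
    · exact hσα
    · exact hσβ
  have := IsGalois.fixedField_fixingSubgroup (IntermediateField.adjoin F {γ})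
  rw [key, fixedField_bot'] at this
  exact this.symm
end

section
/- Let L/F be a finite abelian extension of number fields and α, β ∈ L with L = F(α, β). If Tr_{L/F(α)}(β) = 0 and a, b are nonzero elements of F, then L = F(aα + b·[L:F(α)]·β). -/
open scoped IntermediateField

/-- Let `L/F` be a finite abelian extension of number fields and `α, β ∈ L` with
`L = F(α, β)`. If `Tr_{L/F(α)}(β) = 0` and `a, b` are nonzero elements of `F`, then
`L = F(aα + b·[L:F(α)]·β)`. -/
theorem stmt1 (F L : Type*) [Field F] [Field L] [Algebra F L]
    [NumberField F] [NumberField L] [FiniteDimensional F L] [IsGalois F L]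
    (habel : ∀ σ τ : L ≃ₐ[F] L, σ * τ = τ * σ)
    (α β : L) (hgen : IntermediateField.adjoin F {α, β} = ⊤)
    (htr : Algebra.trace F⟮α⟯ L β = 0)
    (a b : F) (ha : a ≠ 0) (hb : b ≠ 0) :
    IntermediateField.adjoin F
      {algebraMap F L a * α +
        algebraMap F L b * ((Module.finrank F⟮α⟯ L : L) * β)} = ⊤ := by
  classical
  set K := F⟮α⟯ with hK
  haveI : FiniteDimensional K L := FiniteDimensional.right F K L
  set n : ℕ := Module.finrank K L with hn
  set γ : L := algebraMap F L a * α + algebraMap F L b * ((n : L) * β) with hγ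
  have hn0 : (n : L) ≠ 0 := Nat.cast_ne_zero.mpr Module.finrank_pos.ne'
  have ha' : algebraMap F L a ≠ 0 := (map_ne_zero (algebraMap F L)).mpr ha
  have hb' : algebraMap F L b ≠ 0 := (map_ne_zero (algebraMap F L)).mpr hb
  have hα : α ∈ K := IntermediateField.mem_adjoin_simple_self F α
  -- the sum of Galois conjugates of γ over K
  have hβsum : ∑ τ : L ≃ₐ[K] L, τ β = 0 := by
    have h : algebraMap K L (Algebra.trace K L β) = ∑ τ : L ≃ₐ[K] L, τ β :=
      trace_eq_sum_automorphisms β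
    rw [htr, map_zero] at h
    exact h.symm
  have hτγ : ∀ τ : L ≃ₐ[K] L,
      τ γ = algebraMap F L a * α + algebraMap F L b * ((n : L) * τ β) := by
    intro τ
    have hτα : τ α = α := by
      have := τ.commutes ⟨α, hα⟩
      simpa using this
    have hτa : τ (algebraMap F L a) = algebraMap F L a := by
      rw [IsScalarTower.algebraMap_apply F K L, τ.commutes]
    have hτb : τ (algebraMap F L b) = algebraMap F L b := by
      rw [IsScalarTower.algebraMap_apply F K L, τ.commutes]
    rw [hγ, map_add, map_mul, map_mul, map_mul, map_natCast, hτα, hτa, hτb]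
  have hsum : ∑ τ : L ≃ₐ[K] L, τ γ = (n : L) * (algebraMap F L a * α) := by
    simp only [hτγ]
    rw [Finset.sum_add_distrib, Finset.sum_const, ← Finset.mul_sum, ← Finset.mul_sum,
      hβsum, mul_zero, mul_zero, add_zero, Finset.card_univ, ← Nat.card_eq_fintype_card, IsGalois.card_aut_eq_finrank,
      nsmul_eq_mul]
  -- main step: the fixing subgroup of F(γ) is trivial
  have hfix : IntermediateField.fixingSubgroup (IntermediateField.adjoin F {γ}) = ⊥ := by
    rw [eq_bot_iff]
    intro σ hσ
    rw [Subgroup.mem_bot]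
    have hσγ : σ γ = γ :=
      ((IntermediateField.adjoin F {γ}).mem_fixingSubgroup_iff σ).mp hσ γ
        (IntermediateField.mem_adjoin_simple_self F γ)
    have hS : σ (∑ τ : L ≃ₐ[K] L, τ γ) = ∑ τ : L ≃ₐ[K] L, τ γ := by
      rw [map_sum]
      refine Finset.sum_congr rfl fun τ _ => ?_
      have h1 : σ (τ γ) = (σ * (τ.restrictScalars F)) γ := rfl
      rw [h1, habel σ (τ.restrictScalars F)]
      show (τ.restrictScalars F) (σ γ) = τ γ
      rw [hσγ]; rfl
    rw [hsum, map_mul, map_mul, map_natCast, σ.commutes] at hS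
    have hσα : σ α = α := mul_left_cancel₀ ha' (mul_left_cancel₀ hn0 hS)
    have hσβ : σ β = β := by
      have h2 := hσγ
      rw [hγ, map_add, map_mul, map_mul, map_mul, map_natCast, σ.commutes, σ.commutes,
        hσα] at h2
      exact mul_left_cancel₀ hn0 (mul_left_cancel₀ hb' (add_left_cancel h2))
    refine AlgEquiv.ext fun x => ?_
    have hx : x ∈ IntermediateField.adjoin F {α, β} := hgen ▸ IntermediateField.mem_top
    show σ x = x
    induction hx using IntermediateField.adjoin_induction with
    | mem y hy =>
      rcases hy with rfl | hy
      · exact hσα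
      · rw [Set.mem_singleton_iff] at hy; subst hy; exact hσβ
    | algebraMap y => exact σ.commutes y
    | add y z _ _ hy hz => rw [map_add, hy, hz]
    | inv y _ hy => rw [map_inv₀, hy]
    | mul y z _ _ hy hz => rw [map_mul, hy, hz]
  -- conclude via the Galois correspondence
  have h1 := IsGalois.fixedField_fixingSubgroup (IntermediateField.adjoin F {γ}) (F := F)
  rw [hfix] at h1
  rw [← h1]
  ext x
  refine ⟨fun _ => trivial, fun _ => ?_⟩
  rintro ⟨g, hg⟩
  obtain rfl := Subgroup.mem_bot.mp hg
  exact one_smul _ x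
end

section
/- Let ℓ be an odd prime, n = (ℓ−1)/2, ζ = e^{2πi/ℓ}, and define α_{μ,i} = 1 + 2p^μ ζ^i for 1 ≤ i ≤ n+1 and α_{μ,i} = 1 + 2p^μ(ζ^n + ζ^{n+1} − ζ^i − ζ^{−i}) for n+2 ≤ i ≤ 2n. Writing α_{μ,i} = 1 + 2p^μ(Σ_j b_{ij} ζ^j) with b_{ij} ∈ ℤ, the resulting 2n×2n integer matrix B = (b_{ij}) has determinant (−1)^{n−1}. -/
open Complex

/-- Let `ℓ` be an odd prime, `n = (ℓ−1)/2`, `ζ = e^{2πi/ℓ}`, and define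
`α_{μ,i} = 1 + 2p^μ ζ^i` for `1 ≤ i ≤ n+1` and
`α_{μ,i} = 1 + 2p^μ(ζ^n + ζ^{n+1} − ζ^i − ζ^{−i})` for `n+2 ≤ i ≤ 2n`.
Writing `α_{μ,i} = 1 + 2p^μ(Σ_j b_{ij} ζ^j)` with `b_{ij} ∈ ℤ`, the resulting
`2n×2n` integer matrix `B = (b_{ij})` has determinant `(−1)^{n−1}`. -/
theorem stmt3 (ℓ p μ n : ℕ) (hℓ : ℓ.Prime) (hℓo : Odd ℓ) (hp : p.Prime) (hpo : Odd p)
    (hμ : 0 < μ) (hn : n = (ℓ - 1) / 2)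
    (ζ : ℂ) (hζ : ζ = Complex.exp (2 * Real.pi * Complex.I / ℓ))
    (B : Matrix (Fin (2 * n)) (Fin (2 * n)) ℤ)
    (hB : ∀ i : Fin (2 * n),
      (if (i : ℕ) + 1 ≤ n + 1 then (1 + 2 * (p : ℂ) ^ μ * ζ ^ ((i : ℕ) + 1) : ℂ)
        else 1 + 2 * (p : ℂ) ^ μ *
          (ζ ^ n + ζ ^ (n + 1) - ζ ^ ((i : ℕ) + 1) - ζ ^ (ℓ - ((i : ℕ) + 1)))) =
      1 + 2 * (p : ℂ) ^ μ * ∑ j : Fin (2 * n), (B i j : ℂ) * ζ ^ ((j : ℕ) + 1)) :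
    B.det = (-1) ^ (n - 1) := by
  -- basic numerology
  obtain ⟨k, hk⟩ := hℓo
  have hℓ3 : 3 ≤ ℓ := by
    have := hℓ.two_le; omega
  have hℓ2n : ℓ = 2 * n + 1 := by omega
  have hn1 : 1 ≤ n := by omega
  -- linear independence of powers of ζ
  have hprim : IsPrimitiveRoot ζ ℓ := hζ ▸ Complex.isPrimitiveRoot_exp ℓ hℓ.ne_zero
  have hmin : Polynomial.cyclotomic ℓ ℚ = minpoly ℚ ζ :=
    Polynomial.cyclotomic_eq_minpoly_rat hprim hℓ.pos
  have hdeg : (minpoly ℚ ζ).natDegree = 2 * n := by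
    rw [← hmin, Polynomial.natDegree_cyclotomic, Nat.totient_prime hℓ]; omega
  have li : LinearIndependent ℚ fun i : Fin (2 * n) => ζ ^ (i : ℕ) := by
    have h := linearIndependent_pow (K := ℚ) ζ
    rwa [hdeg] at h
  have hζ0 : ζ ≠ 0 := hζ ▸ Complex.exp_ne_zero _
  have hc0 : (2 * (p : ℂ) ^ μ) ≠ 0 :=
    mul_ne_zero two_ne_zero (pow_ne_zero _ (Nat.cast_ne_zero.mpr hp.ne_zero))
  -- the explicit matrix
  set b : Matrix (Fin (2 * n)) (Fin (2 * n)) ℤ := fun i j =>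
    if (i : ℕ) ≤ n then (if j = i then 1 else 0)
    else ((if (j : ℕ) = n - 1 then 1 else 0) + (if (j : ℕ) = n then 1 else 0)
      - (if j = i then 1 else 0) - (if (j : ℕ) = 2 * n - 1 - (i : ℕ) then 1 else 0))
    with hb_def
  -- the explicit matrix also satisfies the defining identity
  have hb : ∀ i : Fin (2 * n),
      (if (i : ℕ) + 1 ≤ n + 1 then (1 + 2 * (p : ℂ) ^ μ * ζ ^ ((i : ℕ) + 1) : ℂ)
        else 1 + 2 * (p : ℂ) ^ μ *
          (ζ ^ n + ζ ^ (n + 1) - ζ ^ ((i : ℕ) + 1) - ζ ^ (ℓ - ((i : ℕ) + 1)))) =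
      1 + 2 * (p : ℂ) ^ μ * ∑ j : Fin (2 * n), (b i j : ℂ) * ζ ^ ((j : ℕ) + 1) := by
    intro i
    by_cases hi : (i : ℕ) ≤ n
    · rw [if_pos (by omega)]
      have : ∑ j : Fin (2 * n), (b i j : ℂ) * ζ ^ ((j : ℕ) + 1) = ζ ^ ((i : ℕ) + 1) := by
        simp only [hb_def, if_pos hi]
        push_cast
        simp [ite_mul]
      rw [this]
    · rw [if_neg (by omega)]
      have hilt := i.isLt
      set a1 : Fin (2 * n) := ⟨n - 1, by omega⟩
      set a2 : Fin (2 * n) := ⟨n, by omega⟩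
      set a4 : Fin (2 * n) := ⟨2 * n - 1 - (i : ℕ), by omega⟩
      have e1 : ∀ j : Fin (2 * n), ((j : ℕ) = n - 1) = (j = a1) := fun j => by
        simp [a1, Fin.ext_iff]
      have e2 : ∀ j : Fin (2 * n), ((j : ℕ) = n) = (j = a2) := fun j => by
        simp [a2, Fin.ext_iff]
      have e4 : ∀ j : Fin (2 * n), ((j : ℕ) = 2 * n - 1 - (i : ℕ)) = (j = a4) := fun j => by
        simp [a4, Fin.ext_iff]
      have : ∑ j : Fin (2 * n), (b i j : ℂ) * ζ ^ ((j : ℕ) + 1) =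
          ζ ^ ((a1 : ℕ) + 1) + ζ ^ ((a2 : ℕ) + 1) - ζ ^ ((i : ℕ) + 1) - ζ ^ ((a4 : ℕ) + 1) := by
        simp only [hb_def, if_neg hi, e1, e2, e4]
        push_cast
        simp [add_mul, sub_mul, ite_mul, Finset.sum_add_distrib, Finset.sum_sub_distrib]
      rw [this]
      have h1 : (a1 : ℕ) + 1 = n := by simp [a1]; omega
      have h2 : (a2 : ℕ) + 1 = n + 1 := by simp [a2]
      have h4 : (a4 : ℕ) + 1 = ℓ - ((i : ℕ) + 1) := by simp [a4]; omega
      rw [h1, h2, h4]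
  -- uniqueness: B = b
  have hBb : B = b := by
    ext i j
    have h1 := hB i
    have h2 := hb i
    have h3 : ∑ j : Fin (2 * n), (B i j : ℂ) * ζ ^ ((j : ℕ) + 1) =
        ∑ j : Fin (2 * n), (b i j : ℂ) * ζ ^ ((j : ℕ) + 1) :=
      mul_left_cancel₀ hc0 (add_left_cancel (h1.symm.trans h2))
    have h4 : ∑ j : Fin (2 * n), (((B i j - b i j : ℤ) : ℚ)) • ζ ^ (j : ℕ) = 0 := by
      apply mul_right_cancel₀ hζ0
      rw [Finset.sum_mul, zero_mul]
      have := sub_eq_zero_of_eq h3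
      rw [← Finset.sum_sub_distrib] at this
      rw [← this]
      apply Finset.sum_congr rfl
      intro j _
      rw [Rat.smul_def]
      push_cast
      ring
    have h5 := Fintype.linearIndependent_iff.mp li _ h4 j
    have : ((B i j - b i j : ℤ) : ℚ) = 0 := h5
    have : (B i j - b i j : ℤ) = 0 := by exact_mod_cast this
    omega
  rw [hBb]
  -- determinant computation via block triangular structure
  have hsz : (n + 1) + (n - 1) = 2 * n := by omega
  set e : Fin (n + 1) ⊕ Fin (n - 1) ≃ Fin (2 * n) :=
    finSumFinEquiv.trans (finCongr hsz) with he
  rw [← Matrix.det_submatrix_equiv_self e b]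
  have hvalL : ∀ x : Fin (n + 1), ((e (Sum.inl x) : Fin (2 * n)) : ℕ) = (x : ℕ) := by
    intro x; simp [he]
  have hvalR : ∀ x : Fin (n - 1), ((e (Sum.inr x) : Fin (2 * n)) : ℕ) = n + 1 + (x : ℕ) := by
    intro x; simp [he]
  have hinj : ∀ u v : Fin (n + 1) ⊕ Fin (n - 1), e u = e v ↔ u = v := fun u v =>
    Equiv.apply_eq_iff_eq e
  have hblock : b.submatrix e e =
      Matrix.fromBlocks 1 0 (Matrix.of fun i j => b (e (Sum.inr i)) (e (Sum.inl j))) (-1) := by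
    ext x y
    rcases x with x | x <;> rcases y with y | y
    · simp only [Matrix.submatrix_apply, Matrix.fromBlocks_apply₁₁]
      simp only [hb_def]
      rw [if_pos (by rw [hvalL]; have := x.isLt; omega)]
      have hiff : (e (Sum.inl y) = e (Sum.inl x)) ↔ (x = y) := by
        rw [hinj]
        constructor
        · intro h; exact (Sum.inl.inj h).symm
        · intro h; rw [h]
      simp only [Matrix.one_apply, hiff]
    · simp only [Matrix.submatrix_apply, Matrix.fromBlocks_apply₁₂]
      simp only [hb_def]
      rw [if_pos (by rw [hvalL]; have := x.isLt; omega)]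
      rw [if_neg (by
        intro h
        have := congrArg Fin.val h
        rw [hvalL, hvalR] at this
        omega)]
      simp
    · simp [Matrix.submatrix_apply, Matrix.fromBlocks_apply₂₁]
    · have hylt := y.isLt
      have hxlt := x.isLt
      simp only [Matrix.submatrix_apply, Matrix.fromBlocks_apply₂₂]
      simp only [hb_def]
      rw [if_neg (by rw [hvalR]; omega)]
      have hj1 : ¬ (((e (Sum.inr y) : Fin (2 * n)) : ℕ) = n - 1) := by rw [hvalR]; omega
      have hj2 : ¬ (((e (Sum.inr y) : Fin (2 * n)) : ℕ) = n) := by rw [hvalR]; omega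
      have hj4 : ¬ (((e (Sum.inr y) : Fin (2 * n)) : ℕ) =
          2 * n - 1 - ((e (Sum.inr x) : Fin (2 * n)) : ℕ)) := by rw [hvalR, hvalR]; omega
      have hiff : (e (Sum.inr y) = e (Sum.inr x)) ↔ (x = y) := by
        rw [hinj]
        constructor
        · intro h; exact (Sum.inr.inj h).symm
        · intro h; rw [h]
      simp only [if_neg hj1, if_neg hj2, if_neg hj4, hiff, Matrix.neg_apply, Matrix.one_apply]
      by_cases h : x = y <;> simp [h, eq_comm]
  rw [hblock, Matrix.det_fromBlocks_zero₁₂, Matrix.det_one, one_mul]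
  have hneg : (-1 : Matrix (Fin (n - 1)) (Fin (n - 1)) ℤ) = -(1 : Matrix _ _ ℤ) := rfl
  rw [hneg, Matrix.det_neg, Matrix.det_one, mul_one, Fintype.card_fin]
end

section
/- Let ℓ be an odd prime, n = (ℓ−1)/2, and for 1 ≤ i, j ≤ 2n let n_{ij} = 1 if ij mod ℓ lies in {1,…,n} and 0 otherwise. Let N'_ℓ ∈ M_{(n+1)×2n}(ℤ/pℤ) be the matrix (n_{ij}) for 1 ≤ i ≤ n+1, 1 ≤ j ≤ 2n, and let N_ℓ = (n_{ij})_{1≤i,j≤n} ∈ M_n(ℤ). Then for an odd prime p, N'_ℓ has rank n+1 over ℤ/pℤ if and only if p does not divide det(N_ℓ). -/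
/-- Let `ℓ` and `p` be odd primes, `n = (ℓ−1)/2`, and for `1 ≤ i, j ≤ 2n` let
`n_{ij} = 1` if `ij mod ℓ` lies in `{1,…,n}` and `0` otherwise. Let
`N'_ℓ ∈ M_{(n+1)×2n}(ℤ/pℤ)` be the matrix `(n_{ij})` for `1 ≤ i ≤ n+1`,
`1 ≤ j ≤ 2n`, and let `N_ℓ = (n_{ij})_{1≤i,j≤n} ∈ M_n(ℤ)`. Then `N'_ℓ` has
rank `n+1` over `ℤ/pℤ` if and only if `p ∤ det(N_ℓ)`. -/
theorem stmt5 (ℓ p n : ℕ) [Fact p.Prime] (hℓ : ℓ.Prime) (hℓo : Odd ℓ)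
    (hpo : Odd p) (hn : n = (ℓ - 1) / 2)
    (N' : Matrix (Fin (n + 1)) (Fin (2 * n)) (ZMod p))
    (hN' : ∀ i j, N' i j =
      if (((i : ℕ) + 1) * ((j : ℕ) + 1)) % ℓ ∈ Finset.Icc 1 n then 1 else 0)
    (N : Matrix (Fin n) (Fin n) ℤ)
    (hN : ∀ i j, N i j =
      if (((i : ℕ) + 1) * ((j : ℕ) + 1)) % ℓ ∈ Finset.Icc 1 n then 1 else 0) :
    N'.rank = n + 1 ↔ ¬ ((p : ℤ) ∣ N.det) := by
  classical
  obtain ⟨hl, hn1⟩ : ℓ = 2 * n + 1 ∧ 1 ≤ n := by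
    have h2 := hℓ.two_le
    obtain ⟨k, hk⟩ := hℓo
    constructor <;> omega
  -- key arithmetic lemma
  have key : ∀ x y : ℕ, 1 ≤ x → x < ℓ → 1 ≤ y → y < ℓ →
      ((x * (ℓ - y) % ℓ ∈ Finset.Icc 1 n) ↔ ¬ (x * y % ℓ ∈ Finset.Icc 1 n)) := by
    intro x y hx1 hx2 hy1 hy2
    have hlpos : 0 < ℓ := by omega
    have hndx : ¬ ℓ ∣ x := fun h => by have := Nat.le_of_dvd (by omega) h; omega
    have hndy : ¬ ℓ ∣ y := fun h => by have := Nat.le_of_dvd (by omega) h; omega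
    have hndy' : ¬ ℓ ∣ (ℓ - y) := fun h => by
      have := Nat.le_of_dvd (by omega) h; omega
    have ha : x * y % ℓ ≠ 0 := by
      intro h
      rcases (Nat.Prime.dvd_mul hℓ).mp (Nat.dvd_of_mod_eq_zero h) with h' | h'
      exacts [hndx h', hndy h']
    have hb : x * (ℓ - y) % ℓ ≠ 0 := by
      intro h
      rcases (Nat.Prime.dvd_mul hℓ).mp (Nat.dvd_of_mod_eq_zero h) with h' | h'
      exacts [hndx h', hndy' h']
    have hma : x * y % ℓ < ℓ := Nat.mod_lt _ hlpos
    have hmb : x * (ℓ - y) % ℓ < ℓ := Nat.mod_lt _ hlpos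
    have hsum : x * y % ℓ + x * (ℓ - y) % ℓ = ℓ := by
      have h0 : x * y + x * (ℓ - y) = x * ℓ := by
        rw [← Nat.mul_add]; congr 1; omega
      have hdvd : ℓ ∣ (x * y % ℓ + x * (ℓ - y) % ℓ) := by
        apply Nat.dvd_of_mod_eq_zero
        rw [← Nat.add_mod, h0]
        simp [Nat.mul_mod_left]
      have h1 := Nat.le_of_dvd (by omega) hdvd
      have h2 : ℓ ∣ (x * y % ℓ + x * (ℓ - y) % ℓ - ℓ) := Nat.dvd_sub hdvd dvd_rfl
      rcases Nat.eq_zero_or_pos (x * y % ℓ + x * (ℓ - y) % ℓ - ℓ) with h3 | h3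
      · omega
      · have := Nat.le_of_dvd h3 h2; omega
    simp only [Finset.mem_Icc]
    omega
  -- pairing of columns
  have pair : ∀ (i : Fin (n + 1)) (a b : ℕ) (ha : a < 2 * n) (hb : b < 2 * n),
      a + b = 2 * n - 1 → N' i ⟨a, ha⟩ = 1 - N' i ⟨b, hb⟩ := by
    intro i a b ha hb hab
    have hi := i.isLt
    have hkey := key ((i : ℕ) + 1) (b + 1) (by omega) (by omega) (by omega) (by omega)
    rw [hN', hN']
    have h1 : ((⟨a, ha⟩ : Fin (2 * n)) : ℕ) + 1 = ℓ - (b + 1) := by simp; omega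
    have h2 : ((⟨b, hb⟩ : Fin (2 * n)) : ℕ) = b := rfl
    rw [h1, h2]
    by_cases hc : ((i : ℕ) + 1) * (b + 1) % ℓ ∈ Finset.Icc 1 n
    · rw [if_pos hc, if_neg (fun h => (hkey.mp h) hc)]
      norm_num
    · rw [if_neg hc, if_pos (hkey.mpr hc)]
      norm_num
  -- the square matrix M
  set M : Matrix (Fin (n + 1)) (Fin (n + 1)) (ZMod p) := Matrix.of fun i j =>
    if h : (j : ℕ) < n then N' i ⟨(j : ℕ), by omega⟩ else 1 with hMdef
  have hMlt : ∀ (i : Fin (n + 1)) (j : Fin (n + 1)) (hj : (j : ℕ) < n),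
      M i j = N' i ⟨(j : ℕ), by omega⟩ := by
    intro i j hj
    simp only [hMdef, Matrix.of_apply, dif_pos hj]
  have hMge : ∀ (i : Fin (n + 1)) (j : Fin (n + 1)) (hj : ¬ (j : ℕ) < n),
      M i j = 1 := by
    intro i j hj
    simp only [hMdef, Matrix.of_apply, dif_neg hj]
  -- M is a column combination of N'
  have hME : M = N' * Matrix.of (fun (k : Fin (2 * n)) (j : Fin (n + 1)) =>
      if (j : ℕ) < n then (if (k : ℕ) = (j : ℕ) then (1 : ZMod p) else 0)
      else ((if (k : ℕ) = 0 then 1 else 0) + (if (k : ℕ) = 2 * n - 1 then 1 else 0))) := by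
    ext i j
    rw [Matrix.mul_apply]
    by_cases hj : (j : ℕ) < n
    · simp only [Matrix.of_apply, if_pos hj]
      rw [hMlt i j hj]
      rw [Finset.sum_eq_single (⟨(j : ℕ), by omega⟩ : Fin (2 * n))]
      · rw [if_pos rfl, mul_one]
      · intro k _ hk
        rw [if_neg (fun h => hk (Fin.ext (by simpa using h))), mul_zero]
      · intro h; exact absurd (Finset.mem_univ _) h
    · simp only [Matrix.of_apply, if_neg hj]
      have hsplit : ∀ k : Fin (2 * n),
          N' i k * ((if (k : ℕ) = 0 then (1 : ZMod p) else 0)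
            + (if (k : ℕ) = 2 * n - 1 then 1 else 0))
          = (if (k : ℕ) = 0 then N' i k else 0)
            + (if (k : ℕ) = 2 * n - 1 then N' i k else 0) := by
        intro k
        simp only [mul_add, mul_ite, mul_one, mul_zero]
      rw [Finset.sum_congr rfl (fun k _ => hsplit k), Finset.sum_add_distrib]
      have hs1 : (∑ k : Fin (2 * n), if (k : ℕ) = 0 then N' i k else 0)
          = N' i ⟨0, by omega⟩ := by
        rw [Finset.sum_eq_single (⟨0, by omega⟩ : Fin (2 * n))]
        · rw [if_pos rfl]
        · intro k _ hk
          exact if_neg (fun h => hk (Fin.ext (by simpa using h)))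
        · intro h; exact absurd (Finset.mem_univ _) h
      have hs2 : (∑ k : Fin (2 * n), if (k : ℕ) = 2 * n - 1 then N' i k else 0)
          = N' i ⟨2 * n - 1, by omega⟩ := by
        rw [Finset.sum_eq_single (⟨2 * n - 1, by omega⟩ : Fin (2 * n))]
        · rw [if_pos rfl]
        · intro k _ hk
          exact if_neg (fun h => hk (Fin.ext (by simpa using h)))
        · intro h; exact absurd (Finset.mem_univ _) h
      rw [hs1, hs2, hMge i j hj]
      rw [pair i (2 * n - 1) 0 (by omega) (by omega) (by omega)]
      ring
  -- N' is a column combination of M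
  have hNF : N' = M * Matrix.of (fun (k : Fin (n + 1)) (j : Fin (2 * n)) =>
      if (j : ℕ) < n then (if (k : ℕ) = (j : ℕ) then (1 : ZMod p) else 0)
      else ((if (k : ℕ) = n then 1 else 0)
        - (if (k : ℕ) = 2 * n - 1 - (j : ℕ) then 1 else 0))) := by
    ext i j
    rw [Matrix.mul_apply]
    by_cases hj : (j : ℕ) < n
    · simp only [Matrix.of_apply, if_pos hj]
      rw [Finset.sum_eq_single (⟨(j : ℕ), by omega⟩ : Fin (n + 1))]
      · rw [if_pos rfl, mul_one, hMlt i _ (by simpa using hj)]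
      · intro k _ hk
        rw [if_neg (fun h => hk (Fin.ext (by simpa using h))), mul_zero]
      · intro h; exact absurd (Finset.mem_univ _) h
    · simp only [Matrix.of_apply, if_neg hj]
      have hjlt := j.isLt
      have hsplit : ∀ k : Fin (n + 1),
          M i k * ((if (k : ℕ) = n then (1 : ZMod p) else 0)
            - (if (k : ℕ) = 2 * n - 1 - (j : ℕ) then 1 else 0))
          = (if (k : ℕ) = n then M i k else 0)
            - (if (k : ℕ) = 2 * n - 1 - (j : ℕ) then M i k else 0) := by
        intro k
        simp only [mul_sub, mul_ite, mul_one, mul_zero]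
      rw [Finset.sum_congr rfl (fun k _ => hsplit k), Finset.sum_sub_distrib]
      have hs1 : (∑ k : Fin (n + 1), if (k : ℕ) = n then M i k else 0)
          = M i ⟨n, by omega⟩ := by
        rw [Finset.sum_eq_single (⟨n, by omega⟩ : Fin (n + 1))]
        · rw [if_pos rfl]
        · intro k _ hk
          exact if_neg (fun h => hk (Fin.ext (by simpa using h)))
        · intro h; exact absurd (Finset.mem_univ _) h
      have hs2 : (∑ k : Fin (n + 1), if (k : ℕ) = 2 * n - 1 - (j : ℕ) then M i k else 0)
          = M i ⟨2 * n - 1 - (j : ℕ), by omega⟩ := by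
        rw [Finset.sum_eq_single (⟨2 * n - 1 - (j : ℕ), by omega⟩ : Fin (n + 1))]
        · rw [if_pos rfl]
        · intro k _ hk
          exact if_neg (fun h => hk (Fin.ext (by simpa using h)))
        · intro h; exact absurd (Finset.mem_univ _) h
      rw [hs1, hs2, hMge i ⟨n, by omega⟩ (by simp),
        hMlt i ⟨2 * n - 1 - (j : ℕ), by omega⟩ (by simp; omega)]
      rw [pair i (2 * n - 1 - (j : ℕ)) (j : ℕ) (by omega) j.isLt (by omega)]
      simp [sub_sub_cancel, Fin.eta]
  -- ranks agree
  have hrankeq : N'.rank = M.rank := by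
    apply le_antisymm
    · conv_lhs => rw [hNF]
      exact Matrix.rank_mul_le_left _ _
    · conv_lhs => rw [hME]
      exact Matrix.rank_mul_le_left _ _
  -- determinant of M equals det N mod p
  set A : Matrix (Fin n) (Fin n) (ZMod p) := N.map (fun x : ℤ => (x : ZMod p)) with hAdef
  have hAdet : A.det = ((N.det : ℤ) : ZMod p) :=
    (RingHom.map_det (Int.castRingHom (ZMod p)) N).symm
  have hlast0 : (Fin.last n) ≠ (0 : Fin (n + 1)) := by
    simp [Fin.ext_iff]; omega
  set M₂ : Matrix (Fin (n + 1)) (Fin (n + 1)) (ZMod p) :=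
    M.updateCol (Fin.last n) (fun k => M k (Fin.last n) + (-1 : ZMod p) • M k 0)
    with hM2def
  have hM2det : M₂.det = M.det := Matrix.det_updateCol_add_smul_self M hlast0 (-1)
  have hM0 : ∀ k : Fin (n + 1), M k 0 = if k = Fin.last n then 0 else 1 := by
    intro k
    rw [hMlt k 0 (by simp; omega), hN']
    have hk := k.isLt
    have h0 : ((⟨((0 : Fin (n + 1)) : ℕ), by omega⟩ : Fin (2 * n)) : ℕ) + 1 = 1 := by simp
    rw [h0, mul_one]
    have hmod : ((k : ℕ) + 1) % ℓ = (k : ℕ) + 1 := Nat.mod_eq_of_lt (by omega)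
    rw [hmod]
    by_cases hkl : k = Fin.last n
    · rw [if_pos hkl, if_neg]
      simp [hkl, Finset.mem_Icc]
    · have hklt : (k : ℕ) < n := by
        rcases Nat.lt_or_ge (k : ℕ) n with h | h
        · exact h
        · exact absurd (Fin.ext (by simp [Fin.val_last]; omega)) hkl
      rw [if_neg hkl, if_pos]
      simp only [Finset.mem_Icc]
      omega
  have hM2col : ∀ k : Fin (n + 1), M₂ k (Fin.last n) = if k = Fin.last n then 1 else 0 := by
    intro k
    rw [hM2def, Matrix.updateCol_self]
    rw [hMge k (Fin.last n) (by simp), hM0 k]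
    by_cases hkl : k = Fin.last n <;> simp [hkl]
  have hM2other : ∀ (i : Fin n) (j : Fin n),
      M₂ (Fin.castSucc i) (Fin.castSucc j) = A i j := by
    intro i j
    rw [hM2def, Matrix.updateCol_ne (Fin.castSucc_lt_last j).ne]
    rw [hMlt _ _ (by simpa using j.isLt)]
    rw [hN', hAdef, Matrix.map_apply, hN]
    rw [apply_ite (fun x : ℤ => (x : ZMod p))]
    simp
  have hMdet : M.det = ((N.det : ℤ) : ZMod p) := by
    rw [← hM2det, Matrix.det_succ_column M₂ (Fin.last n)]
    rw [Finset.sum_eq_single (Fin.last n)]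
    · rw [hM2col (Fin.last n), if_pos rfl, mul_one]
      have hsgn : ((-1 : ZMod p)) ^ ((Fin.last n : ℕ) + (Fin.last n : ℕ)) = 1 :=
        Even.neg_one_pow ⟨(Fin.last n : ℕ), rfl⟩
      rw [hsgn, one_mul, ← hAdet]
      congr 1
      ext i j
      rw [Matrix.submatrix_apply, Fin.succAbove_last, hM2other]
    · intro k _ hk
      rw [hM2col k, if_neg hk]
      ring
    · intro h; exact absurd (Finset.mem_univ _) h
  -- rank-determinant criterion
  have hdet_rank : M.rank = n + 1 ↔ M.det ≠ 0 := by
    constructor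
    · intro hr hdet0
      obtain ⟨v, hv0, hMv⟩ := Matrix.exists_mulVec_eq_zero_iff.mpr hdet0
      have hker : v ∈ LinearMap.ker M.mulVecLin := by
        simpa [Matrix.mulVecLin_apply] using hMv
      have hkerne : LinearMap.ker M.mulVecLin ≠ ⊥ := by
        intro h
        rw [h, Submodule.mem_bot] at hker
        exact hv0 hker
      have hfr : Module.finrank (ZMod p) (LinearMap.ker M.mulVecLin) ≠ 0 := by
        rw [Ne, Submodule.finrank_eq_zero]
        exact hkerne
      have hsum := LinearMap.finrank_range_add_finrank_ker M.mulVecLin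
      rw [Module.finrank_fin_fun] at hsum
      rw [Matrix.rank] at hr
      omega
    · intro hdet0
      have hu : IsUnit M := (Matrix.isUnit_iff_isUnit_det M).mpr (isUnit_iff_ne_zero.mpr hdet0)
      rw [Matrix.rank_of_isUnit M hu, Fintype.card_fin]
  rw [hrankeq, hdet_rank, hMdet]
  rw [Ne, ZMod.intCast_zmod_eq_zero_iff_dvd]
end

section
/- Let ℓ and p be odd primes, n = (ℓ−1)/2, k = ℚ(ζ_ℓ), and suppose p divides neither ℓ, nor h_ℓ^+, nor n. If u = 1 + 2p^μ·b is a real unit in S_μ with b ∈ ℤ[ζ_ℓ + ζ_ℓ^{-1}], write b = a_0 + a_1(ζ+ζ^{-1}) + … + a_{n−1}(ζ+ζ^{-1})^{n−1} with a_i ∈ ℤ. If p divides a_i for all 1 ≤ i ≤ n−1, then p divides a_0 and u ∈ S_{μ+1}. -/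
open Finset in
private lemma aux_expand11 {ι : Type*} [DecidableEq ι] (e : ℂ) (he : IsIntegral ℤ e)
    (x : ι → ℂ) (hx : ∀ i, IsIntegral ℤ (x i)) (s : Finset ι) :
    ∃ S : ℂ, IsIntegral ℤ S ∧
      ∏ i ∈ s, (1 + e * x i) = 1 + e * (∑ i ∈ s, x i) + e ^ 2 * S := by
  have hsum : ∀ t : Finset ι, IsIntegral ℤ (∑ i ∈ t, x i) := fun t =>
    Subalgebra.sum_mem (integralClosure ℤ ℂ) fun i _ => hx i
  induction s using Finset.induction_on with
  | empty => exact ⟨0, isIntegral_zero, by simp⟩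
  | @insert a s hni ih =>
    obtain ⟨S, hS, hprod⟩ := ih
    refine ⟨S + x a * ∑ i ∈ s, x i + e * (x a * S), ?_, ?_⟩
    · exact (hS.add ((hx a).mul (hsum s))).add (he.mul ((hx a).mul hS))
    · rw [Finset.prod_insert hni, hprod, Finset.sum_insert hni]; ring

/-- Let `ℓ` and `p` be odd primes, `n = (ℓ−1)/2`, `k = ℚ(ζ_ℓ)`, and suppose `p`
divides neither `ℓ`, nor `h_ℓ^+`, nor `n`. If `u = 1 + 2p^μ·b` is a real unit in
`S_μ` with `b = a_0 + a_1(ζ+ζ^{-1}) + … + a_{n−1}(ζ+ζ^{-1})^{n−1}`, `a_i ∈ ℤ`, and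
`p ∣ a_i` for all `1 ≤ i ≤ n−1`, then `p ∣ a_0` and `u ∈ S_{μ+1}`. -/
theorem stmt11 (ℓ p n μ : ℕ) (hℓ : ℓ.Prime) (hℓo : Odd ℓ) (hp : p.Prime)
    (hpo : Odd p) (hn : n = (ℓ - 1) / 2) (hμ : 0 < μ)
    (K : Type*) [Field K] [NumberField K] (ζ : K) (hζ : IsPrimitiveRoot ζ ℓ)
    (hgen : Algebra.adjoin ℚ ({ζ} : Set K) = ⊤)
    (hpℓ : ¬ p ∣ ℓ) (hpn : ¬ p ∣ n)
    (c : K ≃ₐ[ℚ] K) (hc : c ζ = ζ⁻¹)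
    (hph : ¬ p ∣
      Nat.card (ClassGroup (NumberField.RingOfIntegers
        (IntermediateField.fixedField (Subgroup.zpowers c)))))
    (u b : K) (a : ℕ → ℤ)
    (hu : u = 1 + 2 * (p : K) ^ μ * b)
    (hb : b = ∑ i ∈ Finset.range n, (a i : K) * (ζ + ζ⁻¹) ^ i)
    (huint : IsIntegral ℤ u) (huunit : ∃ v : K, IsIntegral ℤ v ∧ u * v = 1)
    (hureal : c u = u)
    (hdvd : ∀ i, 1 ≤ i → i ≤ n - 1 → (p : ℤ) ∣ a i) :
    (p : ℤ) ∣ a 0 ∧ ∃ β : K, IsIntegral ℤ β ∧ u = 1 + 2 * (p : K) ^ (μ + 1) * β := by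
  classical
  obtain ⟨v, hvint, huv⟩ := huunit
  -- numerics
  have hp3 : 3 ≤ p := by
    have h2 := hp.two_le
    have := Nat.odd_iff.mp hpo
    omega
  have hℓ3 : 3 ≤ ℓ := by
    have h2 := hℓ.two_le
    have := Nat.odd_iff.mp hℓo
    omega
  obtain ⟨m, hm⟩ := hℓo
  have hℓ1 : ℓ - 1 = 2 * n := by omega
  have hn1 : 1 ≤ n := by omega
  -- integrality basics
  have hζint : IsIntegral ℤ ζ := hζ.isIntegral hℓ.pos
  have hinv : ζ⁻¹ = ζ ^ (ℓ - 1) := by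
    refine (inv_eq_of_mul_eq_one_right ?_)
    rw [← pow_succ']
    rw [show ℓ - 1 + 1 = ℓ by omega, hζ.pow_eq_one]
  have hw : IsIntegral ℤ (ζ + ζ⁻¹) := hζint.add (by rw [hinv]; exact hζint.pow _)
  have hcastK : ∀ m : ℤ, IsIntegral ℤ ((m : K)) := fun m => by
    simpa using isIntegral_algebraMap (R := ℤ) (A := K) (x := m)
  have hbint : IsIntegral ℤ b := by
    rw [hb]
    exact Subalgebra.sum_mem (integralClosure ℤ K)
      fun i _ => (hcastK (a i)).mul (hw.pow i)
  -- finrank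
  have hζQ : IsIntegral ℚ ζ := IsIntegral.of_finite ℚ ζ
  have htop : IntermediateField.adjoin ℚ ({ζ} : Set K) = ⊤ := by
    apply IntermediateField.toSubalgebra_injective
    rw [IntermediateField.adjoin_simple_toSubalgebra_of_isAlgebraic hζQ.isAlgebraic, hgen,
      IntermediateField.top_toSubalgebra]
  have hfr : Module.finrank ℚ K = ℓ - 1 := by
    have h1 : Module.finrank ℚ (IntermediateField.adjoin ℚ ({ζ} : Set K)) =
        (minpoly ℚ ζ).natDegree := IntermediateField.adjoin.finrank hζQ
    rw [htop, IntermediateField.finrank_top'] at h1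
    rw [h1, ← Polynomial.cyclotomic_eq_minpoly_rat hζ hℓ.pos,
      Polynomial.natDegree_cyclotomic, Nat.totient_prime hℓ]
  -- the scalar ε
  set e : ℚ := ((2 * (p : ℤ) ^ μ : ℤ) : ℚ) with he
  have hemap : algebraMap ℚ K e = 2 * (p : K) ^ μ := by
    rw [he, map_intCast]; push_cast; ring
  have hue : u = 1 + algebraMap ℚ K e * b := by rw [hu, hemap]
  -- embeddings into ℂ
  set ec : ℂ := algebraMap ℚ ℂ e with hec
  have hecint : IsIntegral ℤ ec := by
    rw [hec, he, map_intCast]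
    simpa using isIntegral_algebraMap (R := ℤ) (A := ℂ) (x := (2 * (p : ℤ) ^ μ : ℤ))
  have hσ : ∀ σ : K →ₐ[ℚ] ℂ, σ u = 1 + ec * σ b := by
    intro σ; rw [hue, map_add, map_mul, map_one, AlgHom.commutes]
  obtain ⟨S, hSint, hS⟩ := aux_expand11 ec hecint (fun σ : K →ₐ[ℚ] ℂ => σ b)
    (fun σ => hbint.map σ.toRingHom.toIntAlgHom) Finset.univ
  set N : ℚ := Algebra.norm ℚ u with hNdef
  set T : ℚ := Algebra.trace ℚ K b with hTdef
  have hN : algebraMap ℚ ℂ N = ∏ σ : K →ₐ[ℚ] ℂ, σ u :=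
    Algebra.norm_eq_prod_embeddings ℚ ℂ u
  have hT : algebraMap ℚ ℂ T = ∑ σ : K →ₐ[ℚ] ℂ, σ b :=
    trace_eq_sum_embeddings ℂ
  have hNeq : algebraMap ℚ ℂ N = 1 + ec * algebraMap ℚ ℂ T + ec ^ 2 * S := by
    rw [hN, Finset.prod_congr rfl (fun σ _ => hσ σ), hS, hT]
  -- extract the integer Q
  have he0 : e ≠ 0 := by
    rw [he]; push_cast
    positivity
  have hec0 : ec ≠ 0 := by
    rw [hec]; exact (map_ne_zero (algebraMap ℚ ℂ)).mpr he0
  have hqmap : algebraMap ℚ ℂ ((N - 1 - e * T) / e ^ 2) = S := by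
    rw [map_div₀, map_pow, map_sub, map_sub, map_mul, map_one, hNeq, ← hec]
    field_simp
    ring
  have hqint : IsIntegral ℤ ((N - 1 - e * T) / e ^ 2) := by
    rw [← isIntegral_algebraMap_iff (A := ℚ) (B := ℂ) (algebraMap ℚ ℂ).injective, hqmap]
    exact hSint
  obtain ⟨Q, hQ⟩ := IsIntegrallyClosed.isIntegral_iff.mp hqint
  obtain ⟨NZ, hNZ⟩ := IsIntegrallyClosed.isIntegral_iff.mp
    (Algebra.isIntegral_norm ℚ (L := K) huint)
  obtain ⟨TZ, hTZ⟩ := IsIntegrallyClosed.isIntegral_iff.mp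
    (Algebra.isIntegral_trace (R := ℤ) (L := ℚ) hbint)
  simp only [algebraMap_int_eq, eq_intCast] at hQ hNZ hTZ
  -- key integer identity
  have hNQ : (NZ : ℚ) = 1 + e * TZ + e ^ 2 * Q := by
    rw [eq_div_iff (pow_ne_zero 2 he0)] at hQ
    rw [hNZ, hTZ]
    linear_combination -hQ
  have hkey : NZ = 1 + 2 * (p : ℤ) ^ μ * TZ + (2 * (p : ℤ) ^ μ) ^ 2 * Q := by
    rw [he] at hNQ
    exact_mod_cast hNQ
  -- N = ±1, and -1 is impossible
  obtain ⟨MZ, hMZ⟩ := IsIntegrallyClosed.isIntegral_iff.mp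
    (Algebra.isIntegral_norm ℚ (L := K) hvint)
  simp only [algebraMap_int_eq, eq_intCast] at hMZ
  have hNM : NZ * MZ = 1 := by
    have h2 : N * Algebra.norm ℚ v = 1 := by
      rw [hNdef, ← map_mul, huv, map_one]
    have : ((NZ * MZ : ℤ) : ℚ) = 1 := by push_cast; rw [hNZ, hMZ, h2]
    exact_mod_cast this
  have hp3' : (3 : ℤ) ≤ (p : ℤ) := by exact_mod_cast hp3
  have h1 : NZ = 1 := by
    rcases Int.isUnit_iff.mp (IsUnit.of_mul_eq_one _ hNM) with h1 | h1
    · exact h1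
    · exfalso
      rw [h1] at hkey
      have hdv : (p : ℤ) ^ μ ∣ 2 := by
        refine ⟨-(2 * TZ + 4 * (p : ℤ) ^ μ * Q), ?_⟩
        linear_combination -hkey
      have hle : (p : ℤ) ^ μ ≤ 2 := Int.le_of_dvd (by norm_num) hdv
      have : (p : ℤ) ≤ (p : ℤ) ^ μ := le_self_pow₀ (by linarith) hμ.ne'
      linarith
  -- from NZ = 1 : p ∣ TZ
  rw [h1] at hkey
  have hz : (2 * (p : ℤ) ^ μ) * (TZ + 2 * (p : ℤ) ^ μ * Q) = 0 := by
    linear_combination -hkey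
  have hTZQ : TZ = -(2 * (p : ℤ) ^ μ * Q) := by
    rcases mul_eq_zero.mp hz with h | h
    · exfalso
      have : (0:ℤ) < 2 * (p : ℤ) ^ μ := by positivity
      omega
    · linarith
  have hpTZ : (p : ℤ) ∣ TZ := by
    rw [hTZQ]
    exact (((dvd_pow_self (p : ℤ) hμ.ne').mul_left 2).mul_right Q).neg_right
  -- trace computation
  have hτex : ∀ i : ℕ, ∃ m : ℤ, (m : ℚ) = Algebra.trace ℚ K ((ζ + ζ⁻¹) ^ i) := by
    intro i
    obtain ⟨m, hm⟩ := IsIntegrallyClosed.isIntegral_iff.mp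
      (Algebra.isIntegral_trace (R := ℤ) (L := ℚ) (hw.pow i))
    exact ⟨m, by rw [← hm, eq_intCast]⟩
  choose τ hτ using hτex
  have hTsum : T = ∑ i ∈ Finset.range n, (a i : ℚ) * τ i := by
    rw [hTdef, hb, map_sum]
    refine Finset.sum_congr rfl fun i _ => ?_
    have hsm : ((a i : ℤ) : K) * (ζ + ζ⁻¹) ^ i = ((a i : ℤ) : ℚ) • ((ζ + ζ⁻¹) ^ i) := by
      rw [Algebra.smul_def, map_intCast]
    rw [hsm, map_smul, smul_eq_mul, hτ i]
  have hTZsum : TZ = ∑ i ∈ Finset.range n, a i * τ i := by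
    have : ((TZ : ℤ) : ℚ) = ((∑ i ∈ Finset.range n, a i * τ i : ℤ) : ℚ) := by
      rw [hTZ, ← hTdef, hTsum]; push_cast; ring
    exact_mod_cast this
  have hτ0 : τ 0 = 2 * (n : ℤ) := by
    have h01 : ((τ 0 : ℤ) : ℚ) = ((ℓ - 1 : ℕ) : ℚ) := by
      rw [hτ 0, pow_zero, show (1 : K) = algebraMap ℚ K 1 from (map_one _).symm,
        Algebra.trace_algebraMap, hfr]
      simp
    rw [hℓ1] at h01
    exact_mod_cast h01
  -- p ∣ a 0
  have h0mem : 0 ∈ Finset.range n := Finset.mem_range.mpr hn1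
  have hrest : (p : ℤ) ∣ ∑ i ∈ (Finset.range n).erase 0, a i * τ i :=
    Finset.dvd_sum fun i hi => by
      obtain ⟨hi0, hir⟩ := Finset.mem_erase.mp hi
      have hir' : i < n := Finset.mem_range.mp hir
      exact (hdvd i (Nat.one_le_iff_ne_zero.mpr hi0) (by omega)).mul_right _
  have hpa0τ : (p : ℤ) ∣ a 0 * τ 0 := by
    have hsplit := Finset.add_sum_erase (Finset.range n) (fun i => a i * τ i) h0mem
    have : a 0 * τ 0 = TZ - ∑ i ∈ (Finset.range n).erase 0, a i * τ i := by
      rw [hTZsum, ← hsplit]; ring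
    rw [this]
    exact dvd_sub hpTZ hrest
  rw [hτ0] at hpa0τ
  have hpa0 : (p : ℤ) ∣ a 0 := by
    rcases (Int.prime_iff_natAbs_prime.mpr (by simpa using hp)).dvd_mul.mp hpa0τ with h | h
    · exact h
    · exfalso
      have : (p : ℤ) ∣ ((2 * n : ℕ) : ℤ) := by exact_mod_cast h
      have h2n : p ∣ 2 * n := by exact_mod_cast this
      rcases (Nat.Prime.dvd_mul hp).mp h2n with h' | h'
      · have := Nat.le_of_dvd (by norm_num) h'; omega
      · exact hpn h'
  -- construct β
  refine ⟨hpa0, ∑ i ∈ Finset.range n, ((a i / p : ℤ) : K) * (ζ + ζ⁻¹) ^ i, ?_, ?_⟩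
  · exact Subalgebra.sum_mem (integralClosure ℤ K)
      fun i _ => (hcastK _).mul (hw.pow i)
  · have hdivAll : ∀ i, i < n → (p : ℤ) * (a i / p) = a i := by
      intro i hi
      rcases Nat.eq_zero_or_pos i with rfl | hipos
      · exact Int.mul_ediv_cancel' hpa0
      · exact Int.mul_ediv_cancel' (hdvd i hipos (by omega))
    have hbβ : b = (p : K) * ∑ i ∈ Finset.range n, ((a i / p : ℤ) : K) * (ζ + ζ⁻¹) ^ i := by
      rw [hb, Finset.mul_sum]
      refine Finset.sum_congr rfl fun i hi => ?_
      have h := hdivAll i (Finset.mem_range.mp hi)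
      have h2 : ((a i : ℤ) : K) = (p : K) * ((a i / (p : ℤ) : ℤ) : K) := by
        conv_lhs => rw [← h]
        push_cast
        ring
      rw [h2]
      ring
    rw [hu, hbβ, pow_succ]
    ring
end

section
/- Let ℓ = 5 and ξ_2 = ζ_5^{-1/2}·(1−ζ_5^2)/(1−ζ_5) (so ξ_2 = ζ_5^2·(1−ζ_5^2)/(1−ζ_5) up to sign normalization, equal to the golden ratio unit). Then ξ_2^{48} ≡ 1 (mod 14) but ξ_2^{48} ≢ 1 (mod 98) in ℤ[ζ_5]. -/
open Complex

/-- Let `ℓ = 5` and `ξ_2 = ζ_{10}^{-1}·(1−ζ_5^2)/(1−ζ_5)` (a real fundamental unit).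
Then `ξ_2^{48} ≡ 1 (mod 14)` but `ξ_2^{48} ≢ 1 (mod 98)` in `ℤ[ζ_5]`, i.e.
`14 ∣ (ξ_2^{48} − 1)` but `98 ∤ (ξ_2^{48} − 1)` in `ℤ[ζ_5]`. -/
theorem stmt13 (ζ₅ ζ₁₀ ξ : ℂ)
    (h5 : ζ₅ = Complex.exp (2 * Real.pi * Complex.I / 5))
    (h10 : ζ₁₀ = Complex.exp (2 * Real.pi * Complex.I / 10))
    (hξ : ξ = ζ₁₀⁻¹ * ((1 - ζ₅ ^ 2) / (1 - ζ₅))) :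
    (∃ β ∈ Algebra.adjoin ℤ ({ζ₅} : Set ℂ), ξ ^ 48 - 1 = 14 * β) ∧
    ¬ (∃ β ∈ Algebra.adjoin ℤ ({ζ₅} : Set ℂ), ξ ^ 48 - 1 = 98 * β) := by
  have hprim : IsPrimitiveRoot ζ₅ 5 := by
    rw [h5]; exact Complex.isPrimitiveRoot_exp 5 (by norm_num)
  have hζ5 : ζ₅ ^ 5 = 1 := hprim.pow_eq_one
  have hne1 : ζ₅ ≠ 1 := hprim.ne_one (by norm_num)
  have hrel : ζ₅^4 + ζ₅^3 + ζ₅^2 + ζ₅ + 1 = 0 := by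
    have h : (ζ₅ - 1) * (ζ₅^4 + ζ₅^3 + ζ₅^2 + ζ₅ + 1) = 0 := by linear_combination hζ5
    rcases mul_eq_zero.1 h with h1 | h2
    · exact absurd (sub_eq_zero.1 h1) hne1
    · exact h2
  have h102 : ζ₁₀ ^ 2 = ζ₅ := by
    rw [h10, h5, ← Complex.exp_nat_mul]
    congr 1
    push_cast; ring
  have h105 : ζ₁₀ ^ 5 = -1 := by
    rw [h10, ← Complex.exp_nat_mul]
    rw [show (5:ℕ) * (2 * ↑Real.pi * Complex.I / 10) = ↑Real.pi * Complex.I by push_cast; ring]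
    exact Complex.exp_pi_mul_I
  have hinv : ζ₁₀⁻¹ = -ζ₅^2 := by
    refine inv_eq_of_mul_eq_one_right ?_
    rw [← h102]; linear_combination -h105
  have hden : (1:ℂ) - ζ₅ ≠ 0 := sub_ne_zero.2 (Ne.symm hne1)
  have hfrac : (1 - ζ₅^2)/(1 - ζ₅) = 1 + ζ₅ := by
    rw [div_eq_iff hden]; ring
  have hξζ : ξ = -ζ₅^2 - ζ₅^3 := by
    rw [hξ, hfrac, hinv]; ring
  have hsq : ξ^2 = ξ + 1 := by
    rw [hξζ]; linear_combination (ζ₅ + 2) * hζ5 + hrel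
  have h3 : ξ^3 = 2*ξ+1 := by linear_combination (ξ+1)*hsq
  have h6 : ξ^6 = 8*ξ+5 := by linear_combination (ξ^3+2*ξ+1)*h3 + 4*hsq
  have h12 : ξ^12 = 144*ξ+89 := by linear_combination (ξ^6+8*ξ+5)*h6 + 64*hsq
  have h24 : ξ^24 = 46368*ξ+28657 := by linear_combination (ξ^12+144*ξ+89)*h12 + 20736*hsq
  have h48 : ξ^48 = 4807526976*ξ+2971215073 := by
    linear_combination (ξ^24+46368*ξ+28657)*h24 + 2149991424*hsq
  have hζmem : ζ₅ ∈ Algebra.adjoin ℤ ({ζ₅} : Set ℂ) := Algebra.subset_adjoin rfl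
  constructor
  · refine ⟨(212229648:ℂ) - 343394784*ζ₅^2 - 343394784*ζ₅^3, ?_, ?_⟩
    · refine Subalgebra.sub_mem _ (Subalgebra.sub_mem _ ?_ ?_) ?_
      · exact_mod_cast Subalgebra.natCast_mem _ 212229648
      · exact Subalgebra.mul_mem _ (by exact_mod_cast Subalgebra.natCast_mem _ 343394784)
          (Subalgebra.pow_mem _ hζmem 2)
      · exact Subalgebra.mul_mem _ (by exact_mod_cast Subalgebra.natCast_mem _ 343394784)
          (Subalgebra.pow_mem _ hζmem 3)
    · linear_combination h48 + 4807526976*hξζ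
  · rintro ⟨β, hβmem, hβeq⟩
    have h7 : 7 * β = 212229648 - 343394784*ζ₅^2 - 343394784*ζ₅^3 := by
      have h14 : (14:ℂ) * (7*β) = 14 * (212229648 - 343394784*ζ₅^2 - 343394784*ζ₅^3) := by
        linear_combination -hβeq + h48 + 4807526976*hξζ
      exact mul_left_cancel₀ (by norm_num) h14
    rw [Algebra.adjoin_singleton_eq_range_aeval, AlgHom.mem_range] at hβmem
    obtain ⟨p, hp⟩ := hβmem
    have hΦmonic : (Polynomial.cyclotomic 5 ℤ).Monic := Polynomial.cyclotomic.monic 5 ℤ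
    set r := p %ₘ (Polynomial.cyclotomic 5 ℤ) with hrdef
    have hΦroot : Polynomial.aeval ζ₅ (Polynomial.cyclotomic 5 ℤ) = 0 := by
      have h := hprim.isRoot_cyclotomic (by norm_num : 0 < 5)
      rw [Polynomial.aeval_def, ← Polynomial.eval_map, Polynomial.map_cyclotomic]
      exact h
    have hr : Polynomial.aeval ζ₅ r = β := by
      conv_rhs => rw [← hp, ← Polynomial.modByMonic_add_div p (Polynomial.cyclotomic 5 ℤ)]
      simp [hΦroot, hrdef]
    have hdr : r.degree < 4 := by
      have := Polynomial.degree_modByMonic_lt p hΦmonic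
      rwa [Polynomial.degree_cyclotomic, show Nat.totient 5 = 4 by decide] at this
    set g : Polynomial ℤ := Polynomial.C 212229648 - Polynomial.C 343394784 * Polynomial.X^2
        - Polynomial.C 343394784 * Polynomial.X^3 with hgdef
    set s : Polynomial ℤ := Polynomial.C 7 * r - g with hsdef
    have hsaev : Polynomial.aeval ζ₅ s = 0 := by
      simp only [hsdef, hgdef, map_sub, map_mul, map_pow, Polynomial.aeval_C,
        Polynomial.aeval_X, algebraMap_int_eq, eq_intCast, map_ofNat]
      rw [hr]
      linear_combination h7
    have hds : s.degree ≤ 3 := by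
      have hrd : r.degree ≤ 3 := by
        rcases eq_or_ne r 0 with h0 | h0
        · simp [h0]
        · have := Polynomial.natDegree_lt_iff_degree_lt (p := r) (n := 4) h0
          have h4 : r.natDegree < 4 := this.2 hdr
          have : r.natDegree ≤ 3 := by omega
          exact Polynomial.natDegree_le_iff_degree_le.1 this
      have h7r : (Polynomial.C (7:ℤ) * r).degree ≤ 3 := by
        refine le_trans (Polynomial.degree_mul_le _ _)
          (le_trans (add_le_add Polynomial.degree_C_le hrd) ?_)
        decide
      have hgd : g.degree ≤ 3 := by
        refine le_trans (Polynomial.degree_sub_le _ _) (max_le (le_trans (Polynomial.degree_sub_le _ _) (max_le ?_ ?_)) ?_)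
        · exact le_trans Polynomial.degree_C_le (by decide)
        · refine le_trans (Polynomial.degree_mul_le _ _)
            (le_trans (add_le_add Polynomial.degree_C_le (Polynomial.degree_X_pow_le 2)) ?_)
          decide
        · refine le_trans (Polynomial.degree_mul_le _ _)
            (le_trans (add_le_add Polynomial.degree_C_le (Polynomial.degree_X_pow_le 3)) ?_)
          decide
      exact le_trans (Polynomial.degree_sub_le _ _) (max_le h7r hgd)
    have hs0 : s = 0 := by
      by_contra hs0
      have hmapne : s.map (Int.castRingHom ℚ) ≠ 0 := by
        exact (Polynomial.map_ne_zero_iff (f := (Int.castRingHom ℚ)) Int.cast_injective).2 hs0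
      have haevQ : Polynomial.aeval ζ₅ (s.map (Int.castRingHom ℚ)) = 0 := by
        rw [show (Int.castRingHom ℚ) = algebraMap ℤ ℚ from rfl,
          Polynomial.aeval_map_algebraMap]
        exact hsaev
      have hdvd := minpoly.dvd ℚ ζ₅ haevQ
      have hdeg := Polynomial.degree_le_of_dvd hdvd hmapne
      rw [← Polynomial.cyclotomic_eq_minpoly_rat hprim (by norm_num)] at hdeg
      rw [Polynomial.degree_cyclotomic, show Nat.totient 5 = 4 by decide] at hdeg
      have hmapdeg : (s.map (Int.castRingHom ℚ)).degree = s.degree :=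
        Polynomial.degree_map_eq_of_injective Int.cast_injective s
      rw [hmapdeg] at hdeg
      have : (4 : WithBot ℕ) ≤ 3 := le_trans hdeg hds
      norm_num at this
    have hc2 : s.coeff 2 = 7 * r.coeff 2 + 343394784 := by
      simp [hsdef, hgdef, Polynomial.coeff_sub, Polynomial.coeff_C_mul,
        Polynomial.coeff_C, Polynomial.coeff_X_pow]
    rw [hs0] at hc2
    simp at hc2
    omega
end

section
/- Let ℓ be an odd prime, n = (ℓ−1)/2, ζ = ζ_ℓ, ρ = (ζ − ζ^{-1})/ℓ, and define the pairing E(α, β) = Tr_{k/ℚ}(ρ·α·conj(β)) for α, β ∈ k = ℚ(ζ). With the basis e_i = ζ^{2i} (1 ≤ i ≤ n) and e_{n+j} = Σ_{t=1}^{j} ζ^{2t−1} (1 ≤ j ≤ n), the Gram matrix (E(e_i, e_j))_{1≤i,j≤2n} equals the standard symplectic matrix J = [[0, −1_n],[1_n, 0]]. -/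
/-- Let `ℓ` be an odd prime, `n = (ℓ−1)/2`, `ζ = ζ_ℓ`, `ρ = (ζ − ζ^{-1})/ℓ`, and
define the pairing `E(α, β) = Tr_{k/ℚ}(ρ·α·conj(β))` on `k = ℚ(ζ)`. With the basis
`e_i = ζ^{2i}` (`1 ≤ i ≤ n`) and `e_{n+j} = Σ_{t=1}^{j} ζ^{2t−1}` (`1 ≤ j ≤ n`),
the Gram matrix `(E(e_i, e_j))` equals the standard symplectic matrix
`J = [[0, −1_n],[1_n, 0]]`. -/
theorem stmt19 (ℓ n : ℕ) (hℓ : ℓ.Prime) (hℓo : Odd ℓ) (hn : n = (ℓ - 1) / 2)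
    (K : Type*) [Field K] [NumberField K] (ζ : K) (hζ : IsPrimitiveRoot ζ ℓ)
    (hgen : Algebra.adjoin ℚ ({ζ} : Set K) = ⊤)
    (c : K ≃ₐ[ℚ] K) (hc : c ζ = ζ⁻¹)
    (ρ : K) (hρ : ρ = (ζ - ζ⁻¹) / ℓ)
    (e : Fin n ⊕ Fin n → K)
    (he1 : ∀ i : Fin n, e (Sum.inl i) = ζ ^ (2 * ((i : ℕ) + 1)))
    (he2 : ∀ j : Fin n, e (Sum.inr j) =
      ∑ t ∈ Finset.range ((j : ℕ) + 1), ζ ^ (2 * t + 1)) :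
    (Matrix.of fun i j : Fin n ⊕ Fin n => Algebra.trace ℚ K (ρ * e i * c (e j))) =
      Matrix.fromBlocks 0 (-1) 1 0 := by
  have hℓ3 : 3 ≤ ℓ := by
    rcases hℓo with ⟨m, hm⟩
    have := hℓ.two_le
    omega
  have hℓn : ℓ = 2 * n + 1 := by
    rcases hℓo with ⟨m, hm⟩; omega
  set ℓ' : ℕ+ := ⟨ℓ, hℓ.pos⟩ with hℓ'
  have hζ' : IsPrimitiveRoot ζ (ℓ' : ℕ) := hζ
  haveI : IsCyclotomicExtension {(ℓ' : ℕ)} ℚ K := by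
    rw [IsCyclotomicExtension.iff_adjoin_eq_top]
    constructor
    · rintro m hm -
      rw [Set.mem_singleton_iff] at hm
      exact ⟨ζ, by rw [hm]; exact hζ'⟩
    · rw [eq_top_iff, ← hgen]
      apply Algebra.adjoin_mono
      rintro x hx
      rw [Set.mem_singleton_iff] at hx
      subst hx
      exact ⟨(ℓ' : ℕ), Set.mem_singleton _, hℓ.pos.ne', hζ.pow_eq_one⟩
  have hirr : Irreducible (Polynomial.cyclotomic ℓ' ℚ) := Polynomial.cyclotomic.irreducible_rat ℓ'.pos
  have hfin : Module.finrank ℚ K = ℓ - 1 := by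
    rw [IsCyclotomicExtension.finrank K hirr]
    exact Nat.totient_prime hℓ
  have htr1 : Algebra.trace ℚ K 1 = (ℓ - 1 : ℚ) := by
    have h := Algebra.trace_algebraMap (R := ℚ) (S := K) 1
    rw [map_one] at h
    rw [h, hfin, nsmul_eq_mul, mul_one, Nat.cast_sub hℓ.one_lt.le, Nat.cast_one]
  -- trace is invariant under powers coprime to ℓ
  have hcop : ∀ r : ℕ, r.Coprime ℓ →
      Algebra.trace ℚ K (ζ ^ r) = Algebra.trace ℚ K ζ := by
    intro r hr
    have hζr : IsPrimitiveRoot (ζ ^ r) (ℓ' : ℕ) := hζ'.pow_of_coprime r hr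
    have h1 := hζ'.minpoly_eq_cyclotomic_of_irreducible hirr
    have h2 := hζr.minpoly_eq_cyclotomic_of_irreducible hirr
    have hmp : minpoly ℚ (hζ'.powerBasis ℚ).gen = minpoly ℚ (hζr.powerBasis ℚ).gen := by
      simp only [IsPrimitiveRoot.powerBasis_gen]
      rw [← h1, ← h2]
    let σ := (hζ'.powerBasis ℚ).equivOfMinpoly (hζr.powerBasis ℚ) hmp
    have hσζ : σ ζ = ζ ^ r := by
      have h3 := (hζ'.powerBasis ℚ).equivOfMinpoly_gen (hζr.powerBasis ℚ) hmp
      simp only [IsPrimitiveRoot.powerBasis_gen] at h3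
      exact h3
    calc Algebra.trace ℚ K (ζ ^ r) = Algebra.trace ℚ K (σ ζ) := by rw [hσζ]
      _ = Algebra.trace ℚ K ζ := Algebra.trace_eq_of_algEquiv σ ζ
  have htrζ : Algebra.trace ℚ K ζ = -1 := by
    have hgs : ∑ j ∈ Finset.range ℓ, ζ ^ j = 0 := hζ.geom_sum_eq_zero (by omega)
    have h0 : ∑ j ∈ Finset.range ℓ, Algebra.trace ℚ K (ζ ^ j) = 0 := by
      rw [← map_sum, hgs, map_zero]
    rw [show ℓ = (ℓ - 1) + 1 by omega, Finset.sum_range_succ'] at h0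
    simp only [pow_zero, htr1] at h0
    have hre : ∀ j ∈ Finset.range (ℓ - 1),
        Algebra.trace ℚ K (ζ ^ (j + 1)) = Algebra.trace ℚ K ζ := by
      intro j hj
      rw [Finset.mem_range] at hj
      apply hcop
      refine Nat.Coprime.symm (hℓ.coprime_iff_not_dvd.mpr ?_)
      intro hd
      have := Nat.eq_zero_of_dvd_of_lt hd (by omega)
      omega
    rw [Finset.sum_congr rfl hre, Finset.sum_const, Finset.card_range, nsmul_eq_mul] at h0
    have hpos : ((ℓ - 1 : ℕ) : ℚ) ≠ 0 := by
      have : ℓ - 1 ≠ 0 := by omega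
      exact_mod_cast this
    have hcast : ((ℓ - 1 : ℕ) : ℚ) = (ℓ : ℚ) - 1 := by
      push_cast [Nat.cast_sub hℓ.one_lt.le]; ring
    rw [hcast] at h0
    have : ((ℓ:ℚ) - 1) * (Algebra.trace ℚ K ζ + 1) = 0 := by linarith
    rcases mul_eq_zero.mp this with h | h
    · rw [hcast] at hpos; exact absurd h hpos
    · linarith
  -- trace of arbitrary integer powers
  have hζ0 : ζ ≠ 0 := hζ.ne_zero (by omega)
  have hz : ∀ m : ℤ, ζ ^ m = ζ ^ (m % (ℓ:ℤ)).toNat := by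
    intro m
    have hℓ0 : (ℓ:ℤ) ≠ 0 := by exact_mod_cast hℓ.pos.ne'
    have h0 : 0 ≤ m % (ℓ:ℤ) := Int.emod_nonneg m hℓ0
    conv_lhs => rw [← Int.emod_add_mul_ediv m (ℓ:ℤ)]
    rw [zpow_add₀ hζ0, mul_comm, zpow_mul, zpow_natCast, hζ.pow_eq_one, one_zpow, one_mul,
      ← zpow_natCast, Int.toNat_of_nonneg h0]
  have T : ∀ m : ℤ, Algebra.trace ℚ K (ζ ^ m) =
      if (ℓ:ℤ) ∣ m then ((ℓ:ℚ) - 1) else -1 := by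
    intro m
    have hℓ0 : (ℓ:ℤ) ≠ 0 := by exact_mod_cast hℓ.pos.ne'
    rw [hz m]
    by_cases hd : (ℓ:ℤ) ∣ m
    · rw [if_pos hd]
      have h00 : m % (ℓ:ℤ) = 0 := Int.emod_eq_zero_of_dvd hd
      rw [h00]
      simpa using htr1
    · rw [if_neg hd]
      have h0 : 0 ≤ m % (ℓ:ℤ) := Int.emod_nonneg m hℓ0
      have hlt : m % (ℓ:ℤ) < ℓ := Int.emod_lt_of_pos m (by exact_mod_cast hℓ.pos)
      have hne : m % (ℓ:ℤ) ≠ 0 := by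
        intro h
        exact hd (Int.dvd_of_emod_eq_zero h)
      set r := (m % (ℓ:ℤ)).toNat with hr
      have hr0 : r ≠ 0 := by omega
      have hrl : r < ℓ := by omega
      rw [hcop r (Nat.Coprime.symm (hℓ.coprime_iff_not_dvd.mpr (fun hdd => by
        have := Nat.eq_zero_of_dvd_of_lt hdd (by omega); omega))), htrζ]
  have hℓZ : (3:ℤ) ≤ (ℓ:ℤ) := by exact_mod_cast hℓ3
  have hℓQ : ((ℓ:ℚ)) ≠ 0 := by positivity
  -- ρ * ζ^m in terms of zpow
  have hρm : ∀ m : ℤ, ρ * ζ ^ m = ((ℓ:ℚ))⁻¹ • (ζ ^ (m+1) - ζ ^ (m-1)) := by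
    intro m
    have hζm : ζ ^ m ≠ 0 := zpow_ne_zero _ hζ0
    have hℓK : ((ℓ:K)) ≠ 0 := by
      have : ((ℓ:ℕ):K) ≠ 0 := Nat.cast_ne_zero.mpr hℓ.pos.ne'
      exact_mod_cast this
    rw [hρ, zpow_add_one₀ hζ0, zpow_sub_one₀ hζ0, Algebra.smul_def, map_inv₀,
      map_natCast]
    field_simp
  -- the key pairing values
  have F : ∀ m : ℤ, Algebra.trace ℚ K (ρ * ζ ^ m) =
      if (ℓ:ℤ) ∣ (m+1) then 1 else if (ℓ:ℤ) ∣ (m-1) then (-1) else 0 := by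
    intro m
    rw [hρm, map_smul, map_sub, T, T, smul_eq_mul]
    have hnot : ¬((ℓ:ℤ) ∣ (m+1) ∧ (ℓ:ℤ) ∣ (m-1)) := by
      rintro ⟨h1, h2⟩
      have h3 : (ℓ:ℤ) ∣ 2 := by
        have := dvd_sub h1 h2
        simpa using this
      have := Int.le_of_dvd (by norm_num) h3
      omega
    by_cases h1 : (ℓ:ℤ) ∣ (m+1)
    · rw [if_pos h1, if_pos h1, if_neg (fun h2 => hnot ⟨h1, h2⟩)]
      field_simp
      ring
    · by_cases h2 : (ℓ:ℤ) ∣ (m-1)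
      · rw [if_neg h1, if_neg h1, if_pos h2, if_pos h2]
        field_simp
        ring
      · rw [if_neg h1, if_neg h1, if_neg h2, if_neg h2]
        ring
  -- divisibility helpers
  have hkey : ∀ v : ℤ, -(ℓ:ℤ) < v → v < ℓ → ((ℓ:ℤ) ∣ v ↔ v = 0) := by
    intro v h1 h2
    constructor
    · rintro ⟨d, rfl⟩
      rcases lt_trichotomy d 0 with h | h | h
      · nlinarith
      · simp [h]
      · nlinarith
    · rintro rfl; exact dvd_zero _
  have hdvd2 : ∀ u : ℤ, -(ℓ:ℤ) < u → u < ℓ → ((ℓ:ℤ) ∣ 2*u ↔ u = 0) := by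
    intro u b1 b2
    rw [← hkey u b1 b2]
    constructor
    · intro h
      have hp : Prime (ℓ:ℤ) := Nat.prime_iff_prime_int.mp hℓ
      rcases hp.dvd_mul.mp h with h | h
      · exfalso
        have := Int.le_of_dvd (by norm_num) h
        omega
      · exact h
    · exact fun h => h.mul_left 2
  -- mixed powers
  have hmix : ∀ p q : ℕ, ρ * ζ ^ p * (ζ⁻¹) ^ q = ρ * ζ ^ ((p:ℤ) - (q:ℤ)) := by
    intro p q
    rw [zpow_sub₀ hζ0, zpow_natCast, zpow_natCast, div_eq_mul_inv, ← inv_pow, mul_assoc]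
  -- now the matrix computation
  ext i j
  rcases i with a | a <;> rcases j with b | b <;>
    have ha : (a:ℕ) < n := a.isLt <;> have hb : (b:ℕ) < n := b.isLt
  · -- (inl, inl) : zero block
    rw [Matrix.of_apply, he1 a, he1 b, map_pow, hc, hmix, F,
      Matrix.fromBlocks_apply₁₁]
    rw [if_neg, if_neg, Matrix.zero_apply]
    · intro hd
      have := (hkey _ (by push_cast; omega) (by push_cast; omega)).mp hd
      omega
    · intro hd
      have := (hkey _ (by push_cast; omega) (by push_cast; omega)).mp hd
      omega
  · -- (inl, inr) : -1 block
    rw [Matrix.of_apply, he1 a, he2 b, map_sum, Matrix.fromBlocks_apply₁₂]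
    simp only [map_pow, hc]
    rw [Finset.mul_sum, map_sum]
    have hterm : ∀ t ∈ Finset.range ((b:ℕ)+1),
        Algebra.trace ℚ K (ρ * ζ ^ (2 * ((a:ℕ) + 1)) * (ζ⁻¹) ^ (2*t+1)) =
        (if t = (a:ℕ)+1 then (1:ℚ) else 0) + (if t = (a:ℕ) then (-1:ℚ) else 0) := by
      intro t ht
      rw [Finset.mem_range] at ht
      rw [hmix, F]
      have e1 : ((2 * ((a:ℕ) + 1) : ℕ) : ℤ) - ((2*t+1 : ℕ) : ℤ) + 1 = 2*((a:ℤ)+1-(t:ℤ)) := by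
        push_cast; ring
      have e2 : ((2 * ((a:ℕ) + 1) : ℕ) : ℤ) - ((2*t+1 : ℕ) : ℤ) - 1 = 2*((a:ℤ)-(t:ℤ)) := by
        push_cast; ring
      have d1 := hdvd2 ((a:ℤ)+1-(t:ℤ)) (by push_cast; omega) (by push_cast; omega)
      have d2 := hdvd2 ((a:ℤ)-(t:ℤ)) (by push_cast; omega) (by push_cast; omega)
      simp only [e1, e2, d1, d2]
      split_ifs <;> first | (exfalso; omega) | norm_num
    rw [Finset.sum_congr rfl hterm, Finset.sum_add_distrib,
      Finset.sum_ite_eq' _ ((a:ℕ)+1) (fun _ => (1:ℚ)),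
      Finset.sum_ite_eq' _ ((a:ℕ)) (fun _ => (-1:ℚ))]
    simp only [Finset.mem_range, Matrix.neg_apply, Matrix.one_apply, Fin.ext_iff]
    split_ifs <;> first | (exfalso; omega) | norm_num
  · -- (inr, inl) : 1 block
    rw [Matrix.of_apply, he2 a, he1 b, map_pow, hc, Matrix.fromBlocks_apply₂₁,
      Finset.mul_sum, Finset.sum_mul, map_sum]
    have hterm : ∀ t ∈ Finset.range ((a:ℕ)+1),
        Algebra.trace ℚ K (ρ * ζ ^ (2*t+1) * (ζ⁻¹) ^ (2 * ((b:ℕ) + 1))) =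
        (if t = (b:ℕ) then (1:ℚ) else 0) + (if t = (b:ℕ)+1 then (-1:ℚ) else 0) := by
      intro t ht
      rw [Finset.mem_range] at ht
      rw [hmix, F]
      have e1 : ((2*t+1 : ℕ) : ℤ) - ((2 * ((b:ℕ) + 1) : ℕ) : ℤ) + 1 = 2*((t:ℤ)-(b:ℤ)) := by
        push_cast; ring
      have e2 : ((2*t+1 : ℕ) : ℤ) - ((2 * ((b:ℕ) + 1) : ℕ) : ℤ) - 1 = 2*((t:ℤ)-(b:ℤ)-1) := by
        push_cast; ring
      have d1 := hdvd2 ((t:ℤ)-(b:ℤ)) (by push_cast; omega) (by push_cast; omega)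
      have d2 := hdvd2 ((t:ℤ)-(b:ℤ)-1) (by push_cast; omega) (by push_cast; omega)
      simp only [e1, e2, d1, d2]
      split_ifs <;> first | (exfalso; omega) | norm_num
    rw [Finset.sum_congr rfl hterm, Finset.sum_add_distrib,
      Finset.sum_ite_eq' _ ((b:ℕ)) (fun _ => (1:ℚ)),
      Finset.sum_ite_eq' _ ((b:ℕ)+1) (fun _ => (-1:ℚ))]
    simp only [Finset.mem_range, Matrix.one_apply, Fin.ext_iff]
    split_ifs <;> first | (exfalso; omega) | norm_num
  · -- (inr, inr) : zero block
    rw [Matrix.of_apply, he2 a, he2 b, map_sum, Matrix.fromBlocks_apply₂₂]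
    simp only [map_pow, hc]
    simp only [Finset.mul_sum, Finset.sum_mul]
    rw [map_sum, Matrix.zero_apply]
    apply Finset.sum_eq_zero
    intro s hs
    rw [map_sum]
    apply Finset.sum_eq_zero
    intro t ht
    rw [Finset.mem_range] at hs ht
    rw [hmix, F, if_neg, if_neg]
    · intro hd
      have := (hkey _ (by push_cast; omega) (by push_cast; omega)).mp hd
      omega
    · intro hd
      have := (hkey _ (by push_cast; omega) (by push_cast; omega)).mp hd
      omega
end
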